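/- For all n×n pairwise comparison matrices A and B, the unnormalised compatibility index satisfies D_{3u}(A,B) = (1/n²) · Σ_{i=1}^n Σ_{j=1}^n a_ij·b_ji ≥ 1 (equivalently, Σ_{i=1}^n Σ_{j=1}^n a_ij·b_ji ≥ n²), with equality if and only if A = B. -/

import Mathlib

/-- An `n × n` real matrix is a pairwise comparison matrix (PCM) if all entries are
positive and it is reciprocal: `A j i = 1 / A i j`. -/
def IsPCM {n : ℕ} (A : Matrix (Fin n) (Fin n) ℝ) : Prop :=
  ∀ i j, 0 < A i j ∧ A j i = 1 / A i j

/-- Saaty's unnormalised compatibility index `D3u`. -/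
noncomputable def D3u {n : ℕ} (A B : Matrix (Fin n) (Fin n) ℝ) : ℝ :=
  (1 / (n ^ 2 : ℝ)) * ∑ i, ∑ j, A i j * B j i

/-- For PCMs `A` and `B`, `D3u(A,B) ≥ 1` (equivalently `Σᵢⱼ aᵢⱼ·bⱼᵢ ≥ n²`),
with equality if and only if `A = B`. -/
theorem D3u_ge_one {n : ℕ} (hn : 0 < n) (A B : Matrix (Fin n) (Fin n) ℝ)
    (hA : IsPCM A) (hB : IsPCM B) :
    1 ≤ D3u A B ∧ (n ^ 2 : ℝ) ≤ ∑ i, ∑ j, A i j * B j i ∧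
      (D3u A B = 1 ↔ A = B) := by
  have hpos : ∀ i j, 0 < A i j * B j i := fun i j => mul_pos (hA i j).1 (hB j i).1
  have hrec : ∀ i j, A j i * B i j = 1 / (A i j * B j i) := by
    intro i j
    rw [(hA i j).2, (hB j i).2, div_mul_div_comm, one_mul]
  set S := ∑ i, ∑ j, A i j * B j i with hS
  have h2 : S = ∑ i, ∑ j, (1 : ℝ) / (A i j * B j i) := by
    rw [hS, Finset.sum_comm]
    exact Finset.sum_congr rfl fun i _ => Finset.sum_congr rfl fun j _ => hrec i j
  have hdouble : 2 * S = ∑ i, ∑ j, (A i j * B j i + 1 / (A i j * B j i)) := by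
    calc 2 * S = S + S := by ring
      _ = (∑ i, ∑ j, A i j * B j i) + ∑ i, ∑ j, (1:ℝ) / (A i j * B j i) := by
          rw [← hS, ← h2]
      _ = ∑ i, (∑ j, A i j * B j i + ∑ j, (1:ℝ) / (A i j * B j i)) := by
          rw [← Finset.sum_add_distrib]
      _ = ∑ i, ∑ j, (A i j * B j i + 1 / (A i j * B j i)) :=
          Finset.sum_congr rfl fun i _ => Finset.sum_add_distrib.symm
  have hterm : ∀ i j, (2:ℝ) ≤ A i j * B j i + 1 / (A i j * B j i) := by
    intro i j
    have h := hpos i j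
    have h1 : (A i j * B j i) * (1 / (A i j * B j i)) = 1 := mul_one_div_cancel h.ne'
    nlinarith [sq_nonneg (A i j * B j i - 1)]
  have hconst : ∑ _i : Fin n, ∑ _j : Fin n, (2:ℝ) = 2 * (n:ℝ)^2 := by
    simp; ring
  have hsum2 : (2:ℝ) * (n:ℝ)^2 ≤ 2 * S := by
    rw [hdouble, ← hconst]
    exact Finset.sum_le_sum fun i _ => Finset.sum_le_sum fun j _ => hterm i j
  have hSn : ((n:ℝ)^2:ℝ) ≤ S := by linarith
  have hn2pos : (0:ℝ) < (n:ℝ)^2 := by positivity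
  have hD : D3u A B = (1/((n:ℝ)^2)) * S := rfl
  have hDiff : D3u A B = 1 ↔ S = (n:ℝ)^2 := by
    rw [hD]
    rw [one_div, inv_mul_eq_div, div_eq_one_iff_eq hn2pos.ne']
  refine ⟨?_, hSn, ?_⟩
  · rw [hD, one_div, inv_mul_eq_div, le_div_iff₀ hn2pos, one_mul]; exact hSn
  · rw [hDiff]
    constructor
    · intro hSeq
      have hzero : ∑ i : Fin n, ∑ j : Fin n,
          (A i j * B j i + 1 / (A i j * B j i) - 2) = 0 := by
        have hsplit : ∑ i : Fin n, ∑ j : Fin n,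
            (A i j * B j i + 1 / (A i j * B j i) - 2)
            = (∑ i, ∑ j, (A i j * B j i + 1 / (A i j * B j i)))
              - ∑ _i : Fin n, ∑ _j : Fin n, (2:ℝ) := by
          rw [← Finset.sum_sub_distrib]
          exact Finset.sum_congr rfl fun i _ => Finset.sum_sub_distrib (fun j => A i j * B j i + 1 / (A i j * B j i)) (fun _ => (2:ℝ))
        rw [hsplit, ← hdouble, hconst, hSeq]; ring
      have hall : ∀ i j, A i j * B j i + 1 / (A i j * B j i) - 2 = 0 := by
        have h := (Finset.sum_eq_zero_iff_of_nonneg (fun i _ =>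
          Finset.sum_nonneg fun j _ => by linarith [hterm i j])).mp hzero
        intro i j
        have hi := h i (Finset.mem_univ i)
        exact (Finset.sum_eq_zero_iff_of_nonneg (fun j _ => by
          linarith [hterm i j])).mp hi j (Finset.mem_univ j)
      have hone : ∀ i j, A i j * B j i = 1 := by
        intro i j
        have h := hall i j
        have hp := hpos i j
        have h1 : (A i j * B j i) * (1 / (A i j * B j i)) = 1 :=
          mul_one_div_cancel hp.ne'
        have hsq : (A i j * B j i - 1)^2 = 0 := by nlinarith
        have := pow_eq_zero_iff (n := 2) (by norm_num) |>.mp hsq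
        linarith [sub_eq_zero.mp this]
      ext i j
      have h := hone j i
      have hAij : A j i = 1 / A i j := (hA i j).2
      have hp := (hA j i).1
      field_simp at h
      -- h : A j i * B i j = 1
      have : B i j = 1 / A j i := by
        field_simp
        linarith [mul_comm (A j i) (B i j)]
      rw [this, ← (hA j i).2]
    · intro hAB
      subst hAB
      have : ∀ i j, A i j * A j i = 1 := by
        intro i j
        rw [(hA i j).2, mul_one_div_cancel (hA i j).1.ne']
      calc S = ∑ _i : Fin n, ∑ _j : Fin n, (1:ℝ) := by
              rw [hS]; exact Finset.sum_congr rfl fun i _ =>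
                Finset.sum_congr rfl fun j _ => this i j
        _ = (n:ℝ)^2 := by simp; ring
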